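/- Let (W,S) be a Coxeter system with a realization V over a commutative domain 𝕜 ⊆ ℝ. Suppose W preserves a ℤ-lattice Λ ⊆ V and preserves an orthant inside Λ (i.e. the ℤ_{≥0}-span of some ℤ-basis of Λ). Then W permutes a ℤ-basis of Λ, and each simple reflection in S acts on this basis either trivially or as a transposition of two basis elements. -/

import Mathlib

set_option synthInstance.maxHeartbeats 1000000
set_option maxHeartbeats 1000000


open Function

noncomputable section

/-- The subring `ℤ ⊆ ℝ` of integers, used to specialize the base subring `k` to `ℤ`. -/
def intSubring : Subring ℝ := (Int.castRingHom ℝ).range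

/-- A *realization* of a Coxeter system `cs : CoxeterSystem M W` over a commutative domain
`𝕜 ⊆ ℝ` (encoded as a subring of `ℝ`): a `𝕜`-module `V` together with simple roots
`root b ∈ V` and simple coroots `coroot b ∈ V*`, and a linear action `ρ` of `W` on `V`
for which each simple reflection acts by the reflection formula
`s(v) = v - ⟨coroot s, v⟩ • root s`. -/
structure Realization (𝕜 : Subring ℝ) {B W : Type*} [Group W]
    (M : CoxeterMatrix B) (cs : CoxeterSystem M W)
    (V : Type*) [AddCommGroup V] [Module 𝕜 V] where
  root : B → V
  coroot : B → (V →ₗ[𝕜] 𝕜)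
  ρ : W →* (V ≃ₗ[𝕜] V)
  coroot_root_self : ∀ b, coroot b (root b) = 2
  coroot_root_eq_zero_iff : ∀ b b', b ≠ b' → (coroot b (root b') = 0 ↔ M.M b b' = 2)
  simple_act : ∀ (b : B) (v : V), ρ (cs.simple b) v = v - coroot b v • root b

variable {𝕜 : Subring ℝ}

/-- `c ∈ k₊ := k ∩ ℝ_{≥0}`, for an element `c` of the base domain `𝕜 ⊆ ℝ`. -/
def InKPlus (k : Subring ℝ) (c : 𝕜) : Prop := (c : ℝ) ∈ k ∧ 0 ≤ (c : ℝ)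

/-- The almost-orthant spanned by `(X, H)`, where `X` is the `Sum.inl` part of the `𝕜`-basis
`e` and `H` is the `Sum.inr` part: all elements of `V` whose `X`-coordinates lie in
`k₊ = k ∩ ℝ_{≥0}` and whose `H`-coordinates lie in `k`.  (When the `Sum.inr` index type is
empty, this is the orthant spanned by the basis.) -/
def almostOrthant {V ι η : Type*} [AddCommGroup V] [Module 𝕜 V] (k : Subring ℝ)
    (e : Module.Basis (ι ⊕ η) 𝕜 V) : Set V :=
  {v | (∀ p, (e.repr v p : ℝ) ∈ k) ∧ ∀ i : ι, 0 ≤ (e.repr v (Sum.inl i) : ℝ)}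

/-- The data witnessing that the Coxeter group `W`, acting via the realization `r`, preserves
a `k`-lattice (the `k`-span of the `𝕜`-basis `e` of `V`, whose `k`-basis is
`X ∪ H = {e (Sum.inl i)} ∪ {e (Sum.inr j)}`) together with the almost-orthant spanned by
`(X, H)` inside it; each element of `H` is required to be `W`-invariant. -/
structure OrthantSetup (𝕜 k : Subring ℝ) {B W : Type*} [Group W]
    {M : CoxeterMatrix B} {cs : CoxeterSystem M W}
    {V : Type*} [AddCommGroup V] [Module 𝕜 V]
    (r : Realization 𝕜 M cs V) (ι η : Type*) where
  hk : k ≤ 𝕜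
  e : Module.Basis (ι ⊕ η) 𝕜 V
  invariant : ∀ (j : η) (w : W), r.ρ w (e (Sum.inr j)) = e (Sum.inr j)
  lattice_stable : ∀ (w : W) (v : V), (∀ p, ((e.repr v p : ℝ)) ∈ k) →
    ∀ p, ((e.repr (r.ρ w v) p : ℝ)) ∈ k
  orthant_stable : ∀ (w : W), ∀ v ∈ almostOrthant k e, r.ρ w v ∈ almostOrthant k e

namespace OrthantSetup

variable {𝕜 k : Subring ℝ} {B W : Type*} [Group W] {M : CoxeterMatrix B}
  {cs : CoxeterSystem M W} {V : Type*} [AddCommGroup V] [Module 𝕜 V]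
  {r : Realization 𝕜 M cs V} {ι η : Type*}

/-- The element `xᵢ` of `X`. -/
def X (d : OrthantSetup 𝕜 k r ι η) (i : ι) : V := d.e (Sum.inl i)

/-- The element `ħⱼ` of `H`. -/
def hbar (d : OrthantSetup 𝕜 k r ι η) (j : η) : V := d.e (Sum.inr j)

/-- `v` lies in the `k`-span of `H`. -/
def InHSpan (d : OrthantSetup 𝕜 k r ι η) (v : V) : Prop :=
  (∀ i : ι, d.e.repr v (Sum.inl i) = 0) ∧ ∀ j : η, ((d.e.repr v (Sum.inr j) : ℝ)) ∈ k

/-- The set `Xₛ ⊆ X` (identified with a set of indices) of elements of `X` moved by the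
simple reflection with index `b`. -/
def moved (d : OrthantSetup 𝕜 k r ι η) (b : B) : Set ι :=
  {i | r.ρ (cs.simple b) (d.X i) ≠ d.X i}

/-- `g` acts on `V` as a *rescaled shifted transposition* transposing `xᵢ` and `xⱼ`:
`g xᵢ = c • xⱼ + h` and `g xⱼ = c⁻¹ • (xᵢ - h)` for some `c ∈ k₊` invertible with inverse
in `k₊` and some `h` in the `k`-span of `H`, while `g` fixes all other elements of `X`. -/
def IsRST (d : OrthantSetup 𝕜 k r ι η) (g : V ≃ₗ[𝕜] V) (i j : ι) : Prop :=
  i ≠ j ∧ ∃ (c c' : 𝕜) (h : V), InKPlus k c ∧ InKPlus k c' ∧ c * c' = 1 ∧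
    d.InHSpan h ∧ g (d.X i) = c • d.X j + h ∧ g (d.X j) = c' • (d.X i - h) ∧
    ∀ z : ι, z ≠ i → z ≠ j → g (d.X z) = d.X z

/-- The transposition graph: vertices are (the indices of) the elements of `X`, and two
distinct vertices are adjacent when some simple reflection moves both of the corresponding
elements of `X` (i.e. they form the set `Xₛ` for some `s ∈ S`). -/
def transGraph (d : OrthantSetup 𝕜 k r ι η) : SimpleGraph ι where
  Adj i j := i ≠ j ∧ ∃ b : B, i ∈ d.moved b ∧ j ∈ d.moved b
  symm := by
    constructor
    intro i j h
    exact ⟨h.1.symm, h.2.choose, h.2.choose_spec.2, h.2.choose_spec.1⟩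
  loopless := by
    constructor
    intro i h
    exact h.1 rfl

end OrthantSetup
namespace CoxOrthAux

variable {𝕜 : Subring ℝ} {B W : Type*} [Group W] {M : CoxeterMatrix B}
  {cs : CoxeterSystem M W} {V : Type*} [AddCommGroup V] [Module 𝕜 V]
  {r : Realization 𝕜 M cs V} {ι : Type*}

lemma int_one_le {x : ℝ} (h1 : x ∈ intSubring) (h2 : 0 ≤ x) (h3 : x ≠ 0) : 1 ≤ x := by
  rw [intSubring, RingHom.mem_range] at h1
  obtain ⟨n, rfl⟩ := h1
  simp only [Int.coe_castRingHom] at h2 h3 ⊢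
  have h2' : (0 : ℤ) ≤ n := by exact_mod_cast h2
  have h3' : (n : ℤ) ≠ 0 := by exact_mod_cast h3
  exact_mod_cast (by omega : (1 : ℤ) ≤ n)

/-- The "total coordinate sum" additive map. -/
def Nsum (d : OrthantSetup 𝕜 intSubring r ι Empty) : V →+ ℝ where
  toFun v := (d.e.repr v).sum fun _ c => (c : ℝ)
  map_zero' := by simp
  map_add' x y := by
    show ((d.e.repr (x + y)).sum fun _ c => (c : ℝ))
      = ((d.e.repr x).sum fun _ c => (c : ℝ)) + ((d.e.repr y).sum fun _ c => (c : ℝ))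
    rw [map_add]
    exact Finsupp.sum_add_index' (fun a => by simp) (fun a b₁ b₂ => by push_cast; ring)

lemma Nsum_smul (d : OrthantSetup 𝕜 intSubring r ι Empty) (a : 𝕜) (v : V) :
    Nsum d (a • v) = (a : ℝ) * Nsum d v := by
  show ((d.e.repr (a • v)).sum fun _ c => (c : ℝ)) = (a : ℝ) * ((d.e.repr v).sum fun _ c => (c : ℝ))
  rw [map_smul, Finsupp.sum_smul_index (fun i => by simp), Finsupp.mul_sum]
  exact Finsupp.sum_congr fun p _ => by push_cast; ring

lemma coord_nonneg (d : OrthantSetup 𝕜 intSubring r ι Empty) {v : V}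
    (hv : v ∈ almostOrthant intSubring d.e) (p : ι ⊕ Empty) : 0 ≤ (d.e.repr v p : ℝ) := by
  cases p with
  | inl i => exact hv.2 i
  | inr j => exact j.elim

lemma Nsum_nonneg (d : OrthantSetup 𝕜 intSubring r ι Empty) {v : V}
    (hv : v ∈ almostOrthant intSubring d.e) : 0 ≤ Nsum d v :=
  Finset.sum_nonneg fun q _ => coord_nonneg d hv q

lemma one_le_Nsum (d : OrthantSetup 𝕜 intSubring r ι Empty) {v : V}
    (hv : v ∈ almostOrthant intSubring d.e) (h0 : v ≠ 0) : 1 ≤ Nsum d v := by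
  obtain ⟨p, hp⟩ : ∃ p, d.e.repr v p ≠ 0 := by
    by_contra h
    push_neg at h
    exact h0 (d.e.repr.map_eq_zero_iff.mp (Finsupp.ext h))
  have h1 : 1 ≤ (d.e.repr v p : ℝ) :=
    int_one_le (hv.1 p) (coord_nonneg d hv p) (fun h => hp (Subtype.ext h))
  calc (1 : ℝ) ≤ (d.e.repr v p : ℝ) := h1
    _ ≤ Nsum d v :=
      Finset.single_le_sum (fun q _ => coord_nonneg d hv q) (Finsupp.mem_support_iff.mpr hp)

lemma mem_O_basis (d : OrthantSetup 𝕜 intSubring r ι Empty) (p : ι ⊕ Empty) :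
    d.e p ∈ almostOrthant intSubring d.e := by
  classical
  constructor
  · intro q
    rw [Module.Basis.repr_self, Finsupp.single_apply]
    split
    · exact_mod_cast intSubring.one_mem
    · exact_mod_cast intSubring.zero_mem
  · intro i
    rw [Module.Basis.repr_self, Finsupp.single_apply]
    split
    · norm_num
    · norm_num

lemma Nsum_basis (d : OrthantSetup 𝕜 intSubring r ι Empty) (p : ι ⊕ Empty) :
    Nsum d (d.e p) = 1 := by
  show ((d.e.repr (d.e p)).sum fun _ c => (c : ℝ)) = 1
  rw [Module.Basis.repr_self, Finsupp.sum_single_index (by simp)]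
  norm_num

lemma rho_inv_rho (w : W) (v : V) : r.ρ w⁻¹ (r.ρ w v) = v := by
  have h : r.ρ w⁻¹ * r.ρ w = 1 := by rw [← map_mul, inv_mul_cancel, map_one]
  exact congrArg (fun (e : V ≃ₗ[𝕜] V) => e v) h

lemma exists_index (d : OrthantSetup 𝕜 intSubring r ι Empty) (w : W) (i : ι) :
    ∃ j : ι, r.ρ w (d.X i) = d.X j := by
  classical
  have hXO : d.X i ∈ almostOrthant intSubring d.e := mem_O_basis d (Sum.inl i)
  set u := r.ρ w (d.X i) with hu_def
  have huO : u ∈ almostOrthant intSubring d.e := d.orthant_stable w _ hXO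
  have hune : u ≠ 0 := by
    intro h
    apply d.e.ne_zero (Sum.inl i)
    have h2 := congrArg (r.ρ w⁻¹) h
    rw [hu_def] at h2
    rw [rho_inv_rho, map_zero] at h2
    exact h2
  set f := d.e.repr u with hf
  set S := f.support with hS
  have hsum : ∑ p ∈ S, f p • d.e p = u := by
    have h := d.e.linearCombination_repr u
    rw [Finsupp.linearCombination_apply, Finsupp.sum] at h
    exact h
  have hXsum : d.X i = ∑ p ∈ S, f p • (r.ρ w⁻¹ (d.e p)) := by
    have h1 : r.ρ w⁻¹ u = d.X i := by rw [hu_def, rho_inv_rho]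
    rw [← h1, ← hsum, map_sum]
    exact Finset.sum_congr rfl fun p _ => by rw [map_smul]
  have hge1coef : ∀ p ∈ S, 1 ≤ (f p : ℝ) := fun p hp =>
    int_one_le (huO.1 p) (coord_nonneg d huO p)
      (fun h => (Finsupp.mem_support_iff.mp hp) (Subtype.ext h))
  have hge1N : ∀ p : ι ⊕ Empty, 1 ≤ Nsum d (r.ρ w⁻¹ (d.e p)) := fun p =>
    one_le_Nsum d (d.orthant_stable w⁻¹ _ (mem_O_basis d p))
      (fun h => d.e.ne_zero p ((r.ρ w⁻¹).map_eq_zero_iff.mp h))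
  have hterm : ∀ p ∈ S, (1 : ℝ) ≤ (f p : ℝ) * Nsum d (r.ρ w⁻¹ (d.e p)) := by
    intro p hp
    calc (1 : ℝ) ≤ (f p : ℝ) := hge1coef p hp
      _ = (f p : ℝ) * 1 := (mul_one _).symm
      _ ≤ (f p : ℝ) * Nsum d (r.ρ w⁻¹ (d.e p)) := by
          apply mul_le_mul_of_nonneg_left (hge1N p)
          linarith [hge1coef p hp]
  have hNX : (1 : ℝ) = ∑ p ∈ S, (f p : ℝ) * Nsum d (r.ρ w⁻¹ (d.e p)) := by
    have h1 : Nsum d (d.X i) = 1 := Nsum_basis d (Sum.inl i)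
    rw [← h1, hXsum, map_sum]
    exact Finset.sum_congr rfl fun p _ => Nsum_smul d _ _
  have hcardle : (S.card : ℝ) ≤ 1 := by
    have h := Finset.card_nsmul_le_sum S _ (1 : ℝ) hterm
    rw [nsmul_eq_mul, mul_one] at h
    linarith [hNX]
  have hSne : S.Nonempty := Finsupp.support_nonempty_iff.mpr
    (fun h => hune (d.e.repr.map_eq_zero_iff.mp h))
  have hcard : S.card = 1 := le_antisymm (by exact_mod_cast hcardle) (Finset.card_pos.mpr hSne)
  obtain ⟨p₀, hp₀⟩ := Finset.card_eq_one.mp hcard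
  have hp₀mem : p₀ ∈ S := by rw [hp₀]; exact Finset.mem_singleton_self _
  have hsum1 : (f p₀ : ℝ) * Nsum d (r.ρ w⁻¹ (d.e p₀)) = 1 := by
    rw [hNX, hp₀, Finset.sum_singleton]
  have hf1 : (f p₀ : ℝ) = 1 := by
    nlinarith [hge1coef p₀ hp₀mem, hge1N p₀, hsum1]
  have hfp : f p₀ = 1 := Subtype.ext hf1
  have hu : u = d.e p₀ := by rw [← hsum, hp₀, Finset.sum_singleton, hfp, one_smul]
  cases p₀ with
  | inl j => exact ⟨j, hu⟩
  | inr x => exact x.elim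

end CoxOrthAux

open CoxOrthAux in
/-- If a realization of a Coxeter system `(W, S)` over a commutative domain `𝕜 ⊆ ℝ`
preserves a `ℤ`-lattice `Λ ⊆ V` and an orthant inside it (here encoded via an
`OrthantSetup` with an empty set `H`, so that the almost-orthant is the
`ℤ_{≥0}`-span of the basis `X` of `Λ`), then `W` permutes the `ℤ`-basis `X` of `Λ`,
and each simple reflection acts on this basis either trivially or as a transposition
of two basis elements. -/

theorem coxeter_preserving_orthant_permutes_basis
    {𝕜 : Subring ℝ} {B W : Type*} [Group W] {M : CoxeterMatrix B}
    {cs : CoxeterSystem M W} {V : Type*} [AddCommGroup V] [Module 𝕜 V] [Module.Free 𝕜 V]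
    {r : Realization 𝕜 M cs V} {ι : Type*} [DecidableEq ι]
    (d : OrthantSetup 𝕜 intSubring r ι Empty) :
    ∃ φ : W →* Equiv.Perm ι,
      (∀ (w : W) (i : ι), r.ρ w (d.X i) = d.X (φ w i)) ∧
      (∀ b : B, φ (cs.simple b) = 1 ∨
        ∃ i j : ι, i ≠ j ∧ φ (cs.simple b) = Equiv.swap i j) := by
  classical
  have keyex : ∀ (w : W) (i : ι), ∃ j : ι, r.ρ w (d.X i) = d.X j := exists_index d
  set σ : W → ι → ι := fun w i => (keyex w i).choose with hσdef
  have hσ : ∀ w i, r.ρ w (d.X i) = d.X (σ w i) := fun w i => (keyex w i).choose_spec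
  have hXinj : Function.Injective d.X := fun a b h => Sum.inl_injective (d.e.injective h)
  have hmul : ∀ w w' i, σ (w * w') i = σ w (σ w' i) := by
    intro w w' i
    apply hXinj
    calc d.X (σ (w * w') i) = r.ρ (w * w') (d.X i) := (hσ _ _).symm
      _ = r.ρ w (r.ρ w' (d.X i)) := by rw [map_mul]; rfl
      _ = r.ρ w (d.X (σ w' i)) := by rw [hσ]
      _ = d.X (σ w (σ w' i)) := hσ _ _
  have hone : ∀ i, σ 1 i = i := by
    intro i
    apply hXinj
    calc d.X (σ 1 i) = r.ρ 1 (d.X i) := (hσ _ _).symm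
      _ = d.X i := by rw [map_one]; rfl
  have hinvl : ∀ (w : W) i, σ w⁻¹ (σ w i) = i := fun w i => by
    rw [← hmul, inv_mul_cancel, hone]
  have hinvr : ∀ (w : W) i, σ w (σ w⁻¹ i) = i := fun w i => by
    rw [← hmul, mul_inv_cancel, hone]
  refine ⟨{ toFun := fun w => ⟨σ w, σ w⁻¹, hinvl w, hinvr w⟩
            map_one' := Equiv.ext fun i => hone i
            map_mul' := fun w w' => Equiv.ext fun i => hmul w w' i },
          fun w i => hσ w i, ?_⟩
  intro b
  by_cases h1 : ∀ z, σ (cs.simple b) z = z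
  · left
    exact Equiv.ext fun z => h1 z
  · right
    push_neg at h1
    obtain ⟨i, hi⟩ := h1
    have hsinv : ∀ z, σ (cs.simple b) (σ (cs.simple b) z) = z := fun z => by
      rw [← hmul, cs.simple_mul_simple_self b, hone]
    refine ⟨i, σ (cs.simple b) i, Ne.symm hi, ?_⟩
    have key : ∀ z, z ≠ i → z ≠ σ (cs.simple b) i → σ (cs.simple b) z = z := by
      intro z hzi hzj
      by_contra hzz
      have hci : d.X (σ (cs.simple b) i) = d.X i - r.coroot b (d.X i) • r.root b := by
        rw [← hσ]; exact r.simple_act b (d.X i)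
      have hcz : d.X (σ (cs.simple b) z) = d.X z - r.coroot b (d.X z) • r.root b := by
        rw [← hσ]; exact r.simple_act b (d.X z)
      have hcine : r.coroot b (d.X i) ≠ 0 := by
        intro h
        apply hi
        apply hXinj
        rw [hci, h, zero_smul, sub_zero]
      have hroot_i : r.coroot b (d.X i) • r.root b = d.X i - d.X (σ (cs.simple b) i) := by
        rw [hci, sub_sub_cancel]
      have hroot_z : r.coroot b (d.X z) • r.root b = d.X z - d.X (σ (cs.simple b) z) := by
        rw [hcz, sub_sub_cancel]
      have heq : r.coroot b (d.X z) • (d.X i - d.X (σ (cs.simple b) i))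
          = r.coroot b (d.X i) • (d.X z - d.X (σ (cs.simple b) z)) := by
        rw [← hroot_i, ← hroot_z, smul_smul, smul_smul, mul_comm]
      have hXr : ∀ a : ι, d.e.repr (d.X a) (Sum.inl z) = if a = z then 1 else 0 := by
        intro a
        show d.e.repr (d.e (Sum.inl a)) (Sum.inl z) = _
        rw [Module.Basis.repr_self, Finsupp.single_apply]
        simp only [Sum.inl.injEq]
      have hcoord := congrArg (fun v => d.e.repr v (Sum.inl z)) heq
      simp only [map_sub, map_smul, Finsupp.smul_apply, Finsupp.sub_apply, smul_eq_mul,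
        hXr] at hcoord
      have hiz : i ≠ z := Ne.symm hzi
      have hjz : σ (cs.simple b) i ≠ z := fun h => hzj h.symm
      simp only [hiz, hjz, hzz, if_true, if_false, sub_zero, sub_self, zero_sub, neg_zero,
        mul_one, mul_zero] at hcoord
      exact hcine hcoord.symm
    apply Equiv.ext
    intro z
    by_cases hz1 : z = i
    · subst hz1
      rw [Equiv.swap_apply_left]
      rfl
    by_cases hz2 : z = σ (cs.simple b) i
    · subst hz2
      rw [Equiv.swap_apply_right]
      exact hsinv i
    · rw [Equiv.swap_apply_of_ne_of_ne hz1 hz2]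
      exact key z hz1 hz2
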